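/- arXiv:1010.0880 — 8 statements merged into one kernel-verified Lean document; each statement's English description precedes it below -/
import Mathlib

section
/- The real Lie algebra so(3,ℝ) of skew-symmetric 3×3 real matrices (with commutator bracket) is not isomorphic, as a Lie algebra over ℝ, to sl(2,ℝ), the Lie algebra of trace-zero 2×2 real matrices. -/
open Matrix LieAlgebra

lemma skew_no_real_eigen (A B : Matrix (Fin 3) (Fin 3) ℝ)
    (hA : Aᵀ = -A) (hB : Bᵀ = -B) (h : A * B - B * A = (2:ℝ) • B) : B = 0 := by
  have htr : Matrix.trace (Bᵀ * B) = 0 := by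
    have h1 : Matrix.trace ((A * B - B * A)ᵀ * B) = (2:ℝ) * Matrix.trace (Bᵀ * B) := by
      rw [h]; simp [Matrix.transpose_smul, Matrix.smul_mul, Matrix.trace_smul, smul_eq_mul]
    have h2 : Matrix.trace ((A * B - B * A)ᵀ * B) = 0 := by
      rw [Matrix.transpose_sub, Matrix.transpose_mul, Matrix.transpose_mul, hA, hB]
      simp only [Matrix.neg_mul, Matrix.mul_neg, neg_neg, Matrix.sub_mul, Matrix.trace_sub]
      rw [Matrix.mul_assoc, Matrix.mul_assoc, Matrix.trace_mul_comm B (A * B), Matrix.mul_assoc]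
      ring
    have := h1.symm.trans h2
    linarith
  have hsum : ∑ i : Fin 3, ∑ k : Fin 3, B k i * B k i = 0 := by
    simpa [Matrix.trace, Matrix.diag, Matrix.mul_apply, Matrix.transpose_apply] using htr
  ext i j
  have hnn : ∀ i ∈ Finset.univ, (0:ℝ) ≤ ∑ k : Fin 3, B k i * B k i := by
    intro i _; exact Finset.sum_nonneg fun k _ => mul_self_nonneg _
  have h1 := (Finset.sum_eq_zero_iff_of_nonneg hnn).mp hsum j (Finset.mem_univ _)
  have h2 := (Finset.sum_eq_zero_iff_of_nonneg
    (fun k _ => mul_self_nonneg (B k j))).mp h1 i (Finset.mem_univ _)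
  simpa using mul_self_eq_zero.mp h2

/-- The real Lie algebra `so(3, ℝ)` of skew-symmetric `3 × 3` real matrices is not
isomorphic, as a Lie algebra over `ℝ`, to `sl(2, ℝ)`, the Lie algebra of trace-zero
`2 × 2` real matrices. -/
theorem so3_not_isomorphic_to_sl2 :
    IsEmpty ((LieAlgebra.Orthogonal.so (Fin 3) ℝ) ≃ₗ⁅ℝ⁆ (LieAlgebra.SpecialLinear.sl (Fin 2) ℝ)) := by
  constructor
  intro e
  have hHmem : (!![(1:ℝ),0;0,-1]) ∈ LieAlgebra.SpecialLinear.sl (Fin 2) ℝ := by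
    show _ ∈ LinearMap.ker (Matrix.traceLinearMap (Fin 2) ℝ ℝ)
    simp [Matrix.trace_fin_two]
  have hEmem : (!![(0:ℝ),1;0,0]) ∈ LieAlgebra.SpecialLinear.sl (Fin 2) ℝ := by
    show _ ∈ LinearMap.ker (Matrix.traceLinearMap (Fin 2) ℝ ℝ)
    simp [Matrix.trace_fin_two]
  set H : LieAlgebra.SpecialLinear.sl (Fin 2) ℝ := ⟨_, hHmem⟩
  set E : LieAlgebra.SpecialLinear.sl (Fin 2) ℝ := ⟨_, hEmem⟩
  have hbr : ⁅H, E⁆ = (2:ℝ) • E := by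
    apply Subtype.ext
    show (H : Matrix (Fin 2) (Fin 2) ℝ) * E - E * H = (2:ℝ) • (E : Matrix (Fin 2) (Fin 2) ℝ)
    show !![(1:ℝ),0;0,-1] * !![(0:ℝ),1;0,0] - !![(0:ℝ),1;0,0] * !![(1:ℝ),0;0,-1]
        = (2:ℝ) • !![(0:ℝ),1;0,0]
    ext i j
    fin_cases i <;> fin_cases j <;>
      simp [Matrix.mul_apply, Fin.sum_univ_two] <;> norm_num
  set A := e.symm H
  set B := e.symm E
  have hbr2 : ⁅A, B⁆ = (2:ℝ) • B := by
    rw [show ⁅A, B⁆ = e.symm ⁅H, E⁆ from (LieEquiv.map_lie e.symm H E).symm, hbr]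
    exact e.symm.toLinearEquiv.map_smul 2 E
  have hAmem := A.2
  have hBmem := B.2
  rw [LieAlgebra.Orthogonal.mem_so] at hAmem hBmem
  have hval : (A : Matrix (Fin 3) (Fin 3) ℝ) * B - B * A = (2:ℝ) • (B : Matrix (Fin 3) (Fin 3) ℝ) :=
    congrArg Subtype.val hbr2
  have hB0 : (B : Matrix (Fin 3) (Fin 3) ℝ) = 0 := skew_no_real_eigen _ _ hAmem hBmem hval
  have hBz : B = 0 := Subtype.ext hB0
  have hE0 : E = 0 := e.symm.toLinearEquiv.map_eq_zero_iff.mp hBz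
  have : (!![(0:ℝ),1;0,0]) = 0 := congrArg Subtype.val hE0
  have := congrFun (congrFun this 0) 1
  simpa using this
end

section
/- Let b, c ∈ ℝ[X] be real polynomials with b ≠ 0 satisfying b² = b · c' − b' · c (formal derivatives). Then there exists l ∈ ℝ such that c = (X + C l) · b, i.e., c(u) = (u + l)·b(u). -/
open Polynomial

private lemma lc_deriv (p : ℝ[X]) (hp : p.natDegree ≠ 0) :
    (derivative p).leadingCoeff = (p.natDegree : ℝ) * p.leadingCoeff := by
  have hp0 : p ≠ 0 := fun h => hp (by simp [h])
  have h1 : (derivative p).coeff (p.natDegree - 1) = (p.natDegree : ℝ) * p.leadingCoeff := by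
    rw [coeff_derivative]
    have e : p.natDegree - 1 + 1 = p.natDegree := Nat.succ_pred_eq_of_ne_zero hp
    have e2 : ((p.natDegree - 1 : ℕ) : ℝ) + 1 = (p.natDegree : ℝ) := by
      rw [← Nat.cast_succ]
      exact congrArg _ e
    rw [e, e2, leadingCoeff, mul_comm]
  have hne : ((p.natDegree : ℝ) * p.leadingCoeff) ≠ 0 :=
    mul_ne_zero (Nat.cast_ne_zero.mpr hp) (leadingCoeff_ne_zero.mpr hp0)
  have hdeg : (derivative p).natDegree = p.natDegree - 1 :=
    le_antisymm (natDegree_derivative_le p)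
      (le_natDegree_of_ne_zero (h1 ▸ hne))
  rw [leadingCoeff, hdeg, h1]

private lemma aux_wronskian : ∀ (n : ℕ) (d b : ℝ[X]), d.natDegree ≤ n → b ≠ 0 →
    b * derivative d = derivative b * d → ∃ l : ℝ, d = C l * b := by
  intro n
  induction n with
  | zero =>
    intro d b hdn hb h
    have hd0 : d.natDegree = 0 := Nat.le_zero.mp hdn
    obtain ⟨δ, rfl⟩ := natDegree_eq_zero.mp hd0
    rcases eq_or_ne δ 0 with rfl | hδ
    · exact ⟨0, by simp⟩
    · have hb' : derivative b = 0 := by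
        have : derivative b * C δ = 0 := by rw [← h]; simp
        rcases mul_eq_zero.mp this with h' | h'
        · exact h'
        · exact absurd h' (by simp [hδ])
      have hb0 : b.natDegree = 0 := natDegree_eq_zero_of_derivative_eq_zero hb'
      obtain ⟨β, rfl⟩ := natDegree_eq_zero.mp hb0
      have hβ : β ≠ 0 := fun h0 => hb (by simp [h0])
      exact ⟨δ / β, by rw [← C_mul, div_mul_cancel₀ _ hβ]⟩
  | succ n ih =>
    intro d b hdn hb h
    rcases eq_or_ne d 0 with rfl | hd0
    · exact ⟨0, by simp⟩
    by_cases hnd : d.natDegree = 0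
    · -- constant d case, same as base
      obtain ⟨δ, rfl⟩ := natDegree_eq_zero.mp hnd
      have hδ : δ ≠ 0 := fun h0 => hd0 (by simp [h0])
      have hb' : derivative b = 0 := by
        have : derivative b * C δ = 0 := by rw [← h]; simp
        rcases mul_eq_zero.mp this with h' | h'
        · exact h'
        · exact absurd h' (by simp [hδ])
      have hb0 : b.natDegree = 0 := natDegree_eq_zero_of_derivative_eq_zero hb'
      obtain ⟨β, rfl⟩ := natDegree_eq_zero.mp hb0
      have hβ : β ≠ 0 := fun h0 => hb (by simp [h0])
      exact ⟨δ / β, by rw [← C_mul, div_mul_cancel₀ _ hβ]⟩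
    · -- d nonconstant
      have hd' : derivative d ≠ 0 := fun h0 => hnd (natDegree_eq_zero_of_derivative_eq_zero h0)
      have hb' : derivative b ≠ 0 := by
        intro h0
        rw [h0, zero_mul] at h
        exact mul_ne_zero hb hd' h
      have hnb : b.natDegree ≠ 0 := by
        intro h0
        obtain ⟨β, rfl⟩ := natDegree_eq_zero.mp h0
        exact hb' (derivative_C)
      -- leading coefficients
      have hlc : (b * derivative d).leadingCoeff = (derivative b * d).leadingCoeff := by rw [h]
      rw [leadingCoeff_mul, leadingCoeff_mul, lc_deriv d hnd, lc_deriv b hnb] at hlc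
      have hβ : b.leadingCoeff ≠ 0 := leadingCoeff_ne_zero.mpr hb
      have hδ : d.leadingCoeff ≠ 0 := leadingCoeff_ne_zero.mpr hd0
      have hmn : d.natDegree = b.natDegree := by
        have h2 : ((d.natDegree : ℝ) - b.natDegree) * (b.leadingCoeff * d.leadingCoeff) = 0 := by
          linear_combination hlc
        rcases mul_eq_zero.mp h2 with h' | h'
        · exact_mod_cast sub_eq_zero.mp h'
        · exact absurd h' (mul_ne_zero hβ hδ)
      set l : ℝ := d.leadingCoeff / b.leadingCoeff with hl
      set f : ℝ[X] := d - C l * b with hf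
      have hfw : b * derivative f = derivative b * f := by
        have : derivative f = derivative d - C l * derivative b := by
          rw [hf, derivative_sub, derivative_mul, derivative_C, zero_mul, zero_add]
        rw [this, hf, mul_sub, mul_sub, h]
        ring
      rcases eq_or_ne f 0 with hf0 | hf0
      · exact ⟨l, by rw [← sub_eq_zero]; exact hf0⟩
      · exfalso
        have hcoef : f.coeff d.natDegree = 0 := by
          rw [hf, coeff_sub, coeff_C_mul, hmn, ← leadingCoeff, ← hmn, ← leadingCoeff, hl,
            div_mul_cancel₀ _ hβ, sub_self]
        have hfd : f.natDegree < d.natDegree := by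
          have h1 : f.natDegree ≤ d.natDegree := by
            refine (natDegree_sub_le _ _).trans ?_
            simp only [max_le_iff]
            exact ⟨le_refl _, (natDegree_C_mul_le _ _).trans hmn.ge⟩
          rcases lt_or_eq_of_le h1 with h2 | h2
          · exact h2
          · exact absurd (h2 ▸ hcoef) (by rw [← leadingCoeff]; exact leadingCoeff_ne_zero.mpr hf0)
        obtain ⟨l₂, hfl⟩ := ih f b (by omega) hb hfw
        rcases eq_or_ne l₂ 0 with rfl | hl₂
        · exact hf0 (by simpa using hfl)
        · have : f.natDegree = b.natDegree := by
            rw [hfl, natDegree_C_mul hl₂]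
          omega

/-- If real polynomials `b ≠ 0` and `c` satisfy `b² = b c' - b' c` (formal
derivatives), then `c(u) = (u + l) b(u)` for some real constant `l`. -/
theorem rank_one_condition_polynomial (b c : ℝ[X]) (hb : b ≠ 0)
    (h : b ^ 2 = b * derivative c - derivative b * c) :
    ∃ l : ℝ, c = (X + C l) * b := by
  set d : ℝ[X] := c - X * b with hd
  have hw : b * derivative d = derivative b * d := by
    have hdd : derivative d = derivative c - (b + X * derivative b) := by
      rw [hd, derivative_sub, derivative_mul, derivative_X, one_mul]
    rw [hdd, hd]
    linear_combination -h
  obtain ⟨l, hl⟩ := aux_wronskian d.natDegree d b le_rfl hb hw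
  refine ⟨l, ?_⟩
  have : c = X * b + C l * b := by
    rw [← hl, hd]; ring
  rw [this]; ring
end

section
/- Let b ∈ ℝ[X] be a nonzero real polynomial satisfying b · b' + X · (b · b'' − (b')²) = 0 (formal derivatives). Then there exist λ ∈ ℝ and m ∈ ℕ such that b = C λ * X^m, i.e., b(u) = λ u^m. -/
open Polynomial

/-- Degenerate case: if `derivative g = 0` and the Wronskian-type identity holds,
then `g` is a constant multiple of `f`. -/
lemma aux_const_case (f g : ℝ[X]) (hf : f ≠ 0) (hg' : derivative g = 0)
    (key : f * derivative g = derivative f * g) : ∃ c : ℝ, g = C c * f := by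
  rw [hg', mul_zero] at key
  rcases mul_eq_zero.mp key.symm with hf' | hg
  · -- f is a constant
    have hfdeg : f.natDegree = 0 := natDegree_eq_zero_of_derivative_eq_zero hf'
    have hgdeg : g.natDegree = 0 := natDegree_eq_zero_of_derivative_eq_zero hg'
    obtain ⟨a, rfl⟩ := natDegree_eq_zero.mp hfdeg
    obtain ⟨d, rfl⟩ := natDegree_eq_zero.mp hgdeg
    have ha : a ≠ 0 := fun h => hf (by simp [h])
    exact ⟨d / a, by rw [← C_mul, div_mul_cancel₀ _ ha]⟩
  · exact ⟨0, by simp [hg]⟩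

/-- If `f ≠ 0` and `f g' = f' g` (Wronskian vanishes), then `g = c f` for a real
constant `c`. Induction on the degree of `g`. -/
lemma aux_wronskian_s6 (f : ℝ[X]) (hf : f ≠ 0) :
    ∀ n : ℕ, ∀ g : ℝ[X], g.natDegree ≤ n →
      f * derivative g = derivative f * g → ∃ c : ℝ, g = C c * f := by
  intro n
  induction n with
  | zero =>
    intro g hdeg key
    have hg' : derivative g = 0 := by
      obtain ⟨d, rfl⟩ := natDegree_eq_zero.mp (Nat.le_zero.mp hdeg)
      simp
    exact aux_const_case f g hf hg' key
  | succ n ih =>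
    intro g hdeg key
    by_cases hg' : derivative g = 0
    · exact aux_const_case f g hf hg' key
    -- now derivative g ≠ 0, hence derivative f ≠ 0
    have hf' : derivative f ≠ 0 := by
      intro h0
      rw [h0, zero_mul] at key
      exact hg' ((mul_eq_zero.mp key).resolve_left hf)
    have hg0 : g ≠ 0 := fun h => hg' (by simp [h])
    have hdg : 1 ≤ g.natDegree := by
      by_contra hlt
      push_neg at hlt
      obtain ⟨d, rfl⟩ := natDegree_eq_zero.mp (Nat.lt_one_iff.mp hlt)
      simp at hg'
    have hdf : 1 ≤ f.natDegree := by
      by_contra hlt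
      push_neg at hlt
      obtain ⟨a, rfl⟩ := natDegree_eq_zero.mp (Nat.lt_one_iff.mp hlt)
      simp at hf'
    -- compare leading coefficients to get natDegree g = natDegree f
    have hlcg : (derivative g).leadingCoeff = g.leadingCoeff * (g.natDegree : ℝ) := by
      have hnd : (derivative g).natDegree = g.natDegree - 1 :=
        natDegree_eq_of_degree_eq_some (degree_derivative_eq g hdg)
      rw [leadingCoeff, hnd, coeff_derivative, Nat.sub_add_cancel hdg]
      rw [coeff_natDegree]
      push_cast [Nat.cast_sub hdg]
      ring
    have hlcf : (derivative f).leadingCoeff = f.leadingCoeff * (f.natDegree : ℝ) := by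
      have hnd : (derivative f).natDegree = f.natDegree - 1 :=
        natDegree_eq_of_degree_eq_some (degree_derivative_eq f hdf)
      rw [leadingCoeff, hnd, coeff_derivative, Nat.sub_add_cancel hdf]
      rw [coeff_natDegree]
      push_cast [Nat.cast_sub hdf]
      ring
    have hlc := congrArg leadingCoeff key
    rw [leadingCoeff_mul, leadingCoeff_mul, hlcg, hlcf] at hlc
    have hlf0 : f.leadingCoeff ≠ 0 := leadingCoeff_ne_zero.mpr hf
    have hlg0 : g.leadingCoeff ≠ 0 := leadingCoeff_ne_zero.mpr hg0
    have hdeq : (g.natDegree : ℝ) = (f.natDegree : ℝ) := by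
      have h1 : f.leadingCoeff * g.leadingCoeff * (g.natDegree : ℝ)
          = f.leadingCoeff * g.leadingCoeff * (f.natDegree : ℝ) := by
        linear_combination hlc
      exact mul_left_cancel₀ (mul_ne_zero hlf0 hlg0) h1
    have hdeqn : g.natDegree = f.natDegree := Nat.cast_injective hdeq
    set c₀ : ℝ := g.leadingCoeff / f.leadingCoeff with hc₀
    set g₁ : ℝ[X] := g - C c₀ * f with hg₁
    have key₁ : f * derivative g₁ = derivative f * g₁ := by
      rw [hg₁, derivative_sub, derivative_mul, derivative_C, zero_mul, zero_add]
      linear_combination key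
    by_cases hz : g₁ = 0
    · exact ⟨c₀, sub_eq_zero.mp hz⟩
    · -- coefficient of g₁ at g.natDegree vanishes
      have hcoeff : g₁.coeff g.natDegree = 0 := by
        rw [hg₁, coeff_sub, coeff_C_mul, coeff_natDegree, hdeqn, coeff_natDegree,
          hc₀, div_mul_cancel₀ _ hlf0, sub_self]
      have hle : g₁.natDegree ≤ g.natDegree := by
        refine le_trans (natDegree_sub_le _ _) (max_le le_rfl ?_)
        exact le_trans (natDegree_C_mul_le _ _) (le_of_eq hdeqn.symm)
      have hlt : g₁.natDegree < g.natDegree := by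
        rcases lt_or_eq_of_le hle with h | h
        · exact h
        · exfalso
          apply leadingCoeff_ne_zero.mpr hz
          rw [leadingCoeff, h]
          exact hcoeff
      obtain ⟨c', hc'⟩ := ih g₁ (by omega) key₁
      refine ⟨c' + c₀, ?_⟩
      have : g = g₁ + C c₀ * f := by rw [hg₁]; ring
      rw [this, hc', C_add]; ring

/-- If a nonzero real polynomial `b` satisfies
`b b' + X (b b'' - (b')²) = 0` (formal derivatives), then `b = λ Xᵐ` for some
`λ ∈ ℝ` and `m ∈ ℕ`. -/
theorem polynomial_ode_solutions_are_monomials (b : ℝ[X]) (hb : b ≠ 0)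
    (h : b * derivative b
        + X * (b * derivative (derivative b) - (derivative b) ^ 2) = 0) :
    ∃ (l : ℝ) (m : ℕ), b = C l * X ^ m := by
  have key : b * derivative (X * derivative b)
      = derivative b * (X * derivative b) := by
    rw [derivative_mul, derivative_X, one_mul]
    linear_combination h
  obtain ⟨c, hc⟩ := aux_wronskian_s6 b hb (X * derivative b).natDegree
    (X * derivative b) le_rfl key
  -- coefficientwise: n * b_n = c * b_n
  have hcoeff : ∀ n : ℕ, (n : ℝ) * b.coeff n = c * b.coeff n := by
    intro n
    have hn := congrArg (fun p : ℝ[X] => p.coeff n) hc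
    simp only [coeff_C_mul] at hn
    cases n with
    | zero =>
      simp only [coeff_X_mul_zero] at hn
      simpa using hn
    | succ k =>
      rw [coeff_X_mul, coeff_derivative] at hn
      push_cast
      linarith [hn]
  set m := b.natDegree with hm
  have hbm : b.coeff m ≠ 0 := by
    rw [hm, ← leadingCoeff]
    exact leadingCoeff_ne_zero.mpr hb
  have hcm : c = (m : ℝ) := (mul_right_cancel₀ hbm (hcoeff m)).symm
  refine ⟨b.coeff m, m, ?_⟩
  ext n
  rw [coeff_C_mul, coeff_X_pow]
  by_cases hn : n = m
  · simp [hn]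
  · simp only [hn, if_false, mul_zero]
    have h1 := hcoeff n
    rw [hcm] at h1
    have h2 : ((n : ℝ) - (m : ℝ)) * b.coeff n = 0 := by linarith
    have h3 : (n : ℝ) - (m : ℝ) ≠ 0 := by
      intro h4
      exact hn (Nat.cast_injective (by linarith : (n : ℝ) = (m : ℝ)))
    exact (mul_eq_zero.mp h2).resolve_left h3
end

section
/- Let u : ℝ → ℝ → ℝ (first argument time t, second argument space x) be such that for every t the function u t is three times continuously differentiable (ContDiff ℝ 3), and u is a solution of the Harry–Dym equation: for all t, x, the function s ↦ u s x has derivative (u t x)³ · (iteratedDeriv 3 (u t) x) at s = t. Fix ε ∈ ℝ and define v : ℝ → ℝ → ℝ by v t y = (1 − ε·y)² · u t (y / (1 − ε·y)). Then for every t and every y with 1 − ε·y ≠ 0, the function s ↦ v s y has derivative (v t y)³ · (iteratedDeriv 3 (v t) y) at s = t. -/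
open Filter Topology

private lemma hd_x (ε y : ℝ) (hy : 1 - ε * y ≠ 0) :
    HasDerivAt (fun z => z / (1 - ε * z)) (((1 - ε * y) ^ 2)⁻¹) y := by
  have h := (hasDerivAt_id y).div
    ((hasDerivAt_const y (1:ℝ)).sub ((hasDerivAt_id y).const_mul ε)) hy
  refine h.congr_deriv (Eq.symm ?_)
  simp only [Pi.sub_apply, id]
  field_simp
  ring

private lemma hd_a (ε y : ℝ) :
    HasDerivAt (fun z => 1 - ε * z) (-ε) y := by
  have h := (hasDerivAt_const y (1:ℝ)).sub ((hasDerivAt_id y).const_mul ε)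
  exact h.congr_deriv (by ring)

private lemma hd_w1 (ε : ℝ) (f : ℝ → ℝ) (hf : Differentiable ℝ f) (y : ℝ)
    (hy : 1 - ε * y ≠ 0) :
    HasDerivAt (fun z => (1 - ε * z) ^ 2 * f (z / (1 - ε * z)))
      (-(2 * ε) * (1 - ε * y) * f (y / (1 - ε * y)) + deriv f (y / (1 - ε * y))) y := by
  have hx := hd_x ε y hy
  have hfc : HasDerivAt (fun z => f (z / (1 - ε * z)))
      (deriv f (y / (1 - ε * y)) * ((1 - ε * y) ^ 2)⁻¹) y :=
    ((hf _).hasDerivAt).comp y hx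
  have ha : HasDerivAt (fun z => (1 - ε * z) ^ 2)
      (2 * (1 - ε * y) ^ 1 * (-ε)) y := by
    exact ((hd_a ε y).pow 2).congr_deriv (by ring)
  have h := ha.mul hfc
  refine h.congr_deriv (Eq.symm ?_)
  have ha2 : (1 - ε * y) ^ 2 ≠ 0 := pow_ne_zero 2 hy
  try generalize f (y / (1 - ε * y)) = A
  try generalize deriv f (y / (1 - ε * y)) = B
  try generalize deriv (deriv f) (y / (1 - ε * y)) = C
  try generalize deriv (deriv (deriv f)) (y / (1 - ε * y)) = D
  field_simp
  try ring
  try tauto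

private lemma hd_w2 (ε : ℝ) (f : ℝ → ℝ) (hf : Differentiable ℝ f)
    (hf1 : Differentiable ℝ (deriv f)) (y : ℝ) (hy : 1 - ε * y ≠ 0) :
    HasDerivAt (fun z => -(2 * ε) * (1 - ε * z) * f (z / (1 - ε * z)) + deriv f (z / (1 - ε * z)))
      (2 * ε ^ 2 * f (y / (1 - ε * y)) - 2 * ε * (1 - ε * y)⁻¹ * deriv f (y / (1 - ε * y))
        + ((1 - ε * y) ^ 2)⁻¹ * deriv (deriv f) (y / (1 - ε * y))) y := by
  have hx := hd_x ε y hy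
  have hfc : HasDerivAt (fun z => f (z / (1 - ε * z)))
      (deriv f (y / (1 - ε * y)) * ((1 - ε * y) ^ 2)⁻¹) y :=
    ((hf _).hasDerivAt).comp y hx
  have hf1c : HasDerivAt (fun z => deriv f (z / (1 - ε * z)))
      (deriv (deriv f) (y / (1 - ε * y)) * ((1 - ε * y) ^ 2)⁻¹) y :=
    ((hf1 _).hasDerivAt).comp y hx
  have ha : HasDerivAt (fun z => -(2 * ε) * (1 - ε * z)) (-(2 * ε) * (-ε)) y :=
    (hd_a ε y).const_mul _
  have h := (ha.mul hfc).add hf1c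
  refine h.congr_deriv (Eq.symm ?_)
  have ha2 : (1 - ε * y) ^ 2 ≠ 0 := pow_ne_zero 2 hy
  try generalize f (y / (1 - ε * y)) = A
  try generalize deriv f (y / (1 - ε * y)) = B
  try generalize deriv (deriv f) (y / (1 - ε * y)) = C
  try generalize deriv (deriv (deriv f)) (y / (1 - ε * y)) = D
  field_simp
  try ring
  try tauto

private lemma hd_w3 (ε : ℝ) (f : ℝ → ℝ) (hf : Differentiable ℝ f)
    (hf1 : Differentiable ℝ (deriv f)) (hf2 : Differentiable ℝ (deriv (deriv f)))
    (y : ℝ) (hy : 1 - ε * y ≠ 0) :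
    HasDerivAt (fun z => 2 * ε ^ 2 * f (z / (1 - ε * z))
        - 2 * ε * (1 - ε * z)⁻¹ * deriv f (z / (1 - ε * z))
        + ((1 - ε * z) ^ 2)⁻¹ * deriv (deriv f) (z / (1 - ε * z)))
      ((((1 - ε * y) ^ 2)⁻¹) ^ 2 * deriv (deriv (deriv f)) (y / (1 - ε * y))) y := by
  have hx := hd_x ε y hy
  have hfc : HasDerivAt (fun z => f (z / (1 - ε * z)))
      (deriv f (y / (1 - ε * y)) * ((1 - ε * y) ^ 2)⁻¹) y :=
    ((hf _).hasDerivAt).comp y hx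
  have hf1c : HasDerivAt (fun z => deriv f (z / (1 - ε * z)))
      (deriv (deriv f) (y / (1 - ε * y)) * ((1 - ε * y) ^ 2)⁻¹) y :=
    ((hf1 _).hasDerivAt).comp y hx
  have hf2c : HasDerivAt (fun z => deriv (deriv f) (z / (1 - ε * z)))
      (deriv (deriv (deriv f)) (y / (1 - ε * y)) * ((1 - ε * y) ^ 2)⁻¹) y :=
    ((hf2 _).hasDerivAt).comp y hx
  have hainv : HasDerivAt (fun z => (1 - ε * z)⁻¹) (-(-ε) / (1 - ε * y) ^ 2) y :=
    (hd_a ε y).inv hy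
  have ha2 : HasDerivAt (fun z => (1 - ε * z) ^ 2)
      (2 * (1 - ε * y) ^ 1 * (-ε)) y := by
    exact ((hd_a ε y).pow 2).congr_deriv (by ring)
  have ha2inv : HasDerivAt (fun z => ((1 - ε * z) ^ 2)⁻¹)
      (-(2 * (1 - ε * y) ^ 1 * (-ε)) / ((1 - ε * y) ^ 2) ^ 2) y :=
    ha2.inv (pow_ne_zero 2 hy)
  have hterm1 : HasDerivAt (fun z => 2 * ε ^ 2 * f (z / (1 - ε * z)))
      (2 * ε ^ 2 * (deriv f (y / (1 - ε * y)) * ((1 - ε * y) ^ 2)⁻¹)) y :=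
    hfc.const_mul _
  have hterm2 := ((hainv.const_mul (2 * ε)).mul hf1c)
  have hterm3 := ha2inv.mul hf2c
  have h := (hterm1.sub hterm2).add hterm3
  refine h.congr_deriv (Eq.symm ?_)
  have ha2 : (1 - ε * y) ^ 2 ≠ 0 := pow_ne_zero 2 hy
  try generalize f (y / (1 - ε * y)) = A
  try generalize deriv f (y / (1 - ε * y)) = B
  try generalize deriv (deriv f) (y / (1 - ε * y)) = C
  try generalize deriv (deriv (deriv f)) (y / (1 - ε * y)) = D
  field_simp
  try ring
  try tauto

/-- Projective symmetry of the Harry–Dym equation `u_t = u³ u_{xxx}`: if `u` is a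
solution (each `u t` being `C³`), then for any `ε ∈ ℝ`, the function
`v t y = (1 - ε y)² * u t (y / (1 - ε y))` satisfies the Harry–Dym equation at
every point with `1 - ε y ≠ 0`. -/
theorem harry_dym_projective_symmetry (u : ℝ → ℝ → ℝ)
    (hreg : ∀ t, ContDiff ℝ 3 (u t))
    (hsol : ∀ t x, HasDerivAt (fun s => u s x)
      ((u t x) ^ 3 * iteratedDeriv 3 (u t) x) t)
    (ε : ℝ) (v : ℝ → ℝ → ℝ)
    (hv : ∀ t y, v t y = (1 - ε * y) ^ 2 * u t (y / (1 - ε * y))) :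
    ∀ t y, 1 - ε * y ≠ 0 →
      HasDerivAt (fun s => v s y) ((v t y) ^ 3 * iteratedDeriv 3 (v t) y) t := by
  intro t y hy
  set f := u t with hfdef
  -- differentiability of f and its derivatives
  have hC3 : ContDiff ℝ 3 f := hreg t
  have hf : Differentiable ℝ f := hC3.differentiable (by norm_num)
  have hC2 : ContDiff ℝ 2 (deriv f) :=
    (contDiff_succ_iff_deriv.mp (by exact_mod_cast hC3 : ContDiff ℝ ((2:ℕ∞)+1) f)).2.2
  have hf1 : Differentiable ℝ (deriv f) := hC2.differentiable (by norm_num)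
  have hC1 : ContDiff ℝ 1 (deriv (deriv f)) :=
    (contDiff_succ_iff_deriv.mp (by exact_mod_cast hC2 : ContDiff ℝ ((1:ℕ∞)+1) (deriv f))).2.2
  have hf2 : Differentiable ℝ (deriv (deriv f)) := hC1.differentiable (by norm_num)
  -- the open set where the transformation is defined
  have hS : IsOpen {z : ℝ | 1 - ε * z ≠ 0} := by
    have : Continuous fun z : ℝ => 1 - ε * z := by continuity
    exact isOpen_ne.preimage this
  have hvt : v t = fun z => (1 - ε * z) ^ 2 * f (z / (1 - ε * z)) := funext (hv t)
  -- first derivative on S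
  have hd1 : ∀ z, 1 - ε * z ≠ 0 → deriv (v t) z =
      -(2 * ε) * (1 - ε * z) * f (z / (1 - ε * z)) + deriv f (z / (1 - ε * z)) := by
    intro z hz
    rw [hvt]
    exact (hd_w1 ε f hf z hz).deriv
  -- second derivative on S
  have hd2 : ∀ z, 1 - ε * z ≠ 0 → deriv (deriv (v t)) z =
      2 * ε ^ 2 * f (z / (1 - ε * z)) - 2 * ε * (1 - ε * z)⁻¹ * deriv f (z / (1 - ε * z))
        + ((1 - ε * z) ^ 2)⁻¹ * deriv (deriv f) (z / (1 - ε * z)) := by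
    intro z hz
    have heq : deriv (v t) =ᶠ[𝓝 z] fun z' =>
        -(2 * ε) * (1 - ε * z') * f (z' / (1 - ε * z')) + deriv f (z' / (1 - ε * z')) :=
      eventually_of_mem (hS.mem_nhds hz) (fun z' hz' => hd1 z' hz')
    rw [heq.deriv_eq]
    exact (hd_w2 ε f hf hf1 z hz).deriv
  -- third derivative at y
  have hd3 : deriv (deriv (deriv (v t))) y =
      (((1 - ε * y) ^ 2)⁻¹) ^ 2 * deriv (deriv (deriv f)) (y / (1 - ε * y)) := by
    have heq : deriv (deriv (v t)) =ᶠ[𝓝 y] fun z' =>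
        2 * ε ^ 2 * f (z' / (1 - ε * z')) - 2 * ε * (1 - ε * z')⁻¹ * deriv f (z' / (1 - ε * z'))
          + ((1 - ε * z') ^ 2)⁻¹ * deriv (deriv f) (z' / (1 - ε * z')) :=
      eventually_of_mem (hS.mem_nhds hy) (fun z' hz' => hd2 z' hz')
    rw [heq.deriv_eq]
    exact (hd_w3 ε f hf hf1 hf2 y hy).deriv
  have hiter : ∀ g : ℝ → ℝ, iteratedDeriv 3 g = deriv (deriv (deriv g)) := by
    intro g; simp [iteratedDeriv_eq_iterate]
  -- time derivative
  have hsv : (fun s => v s y) = fun s => (1 - ε * y) ^ 2 * u s (y / (1 - ε * y)) := by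
    funext s; exact hv s y
  have ht := (hsol t (y / (1 - ε * y))).const_mul ((1 - ε * y) ^ 2)
  rw [hsv]
  refine ht.congr_deriv (Eq.symm ?_)
  rw [hiter, hd3, hv t y, ← hfdef, hiter]
  field_simp
end

section
/- Fix K ∈ ℝ. Let u : ℝ → ℝ → ℝ be such that for every t the function u t is three times continuously differentiable (ContDiff ℝ 3), deriv (u t) x ≠ 0 for all t, x, and u is a solution of the Schwarzian evolution equation: for all t, x, the function s ↦ u s x has derivative K·( iteratedDeriv 3 (u t) x / (deriv (u t) x)³ − (3/2)·(iteratedDeriv 2 (u t) x)² / (deriv (u t) x)⁴ ) at s = t. Fix ε ∈ ℝ and define v t x = u t (x / (1 + ε·x)). Then for every t and every x with 1 + ε·x ≠ 0, deriv (v t) x ≠ 0 and the function s ↦ v s x has derivative K·( iteratedDeriv 3 (v t) x / (deriv (v t) x)³ − (3/2)·(iteratedDeriv 2 (v t) x)² / (deriv (v t) x)⁴ ) at s = t. -/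
open Filter Topology

/-- Key computation: derivatives up to order 3 of `f ∘ (x ↦ x/(1+εx))`. -/
lemma moebius_derivs (f : ℝ → ℝ) (hf : ContDiff ℝ 3 f) (ε x : ℝ) (hc : 1 + ε * x ≠ 0) :
    deriv (fun z => f (z / (1 + ε * z))) x
      = deriv f (x / (1 + ε * x)) / (1 + ε * x) ^ 2 ∧
    iteratedDeriv 2 (fun z => f (z / (1 + ε * z))) x
      = deriv (deriv f) (x / (1 + ε * x)) / (1 + ε * x) ^ 4
        - 2 * ε * deriv f (x / (1 + ε * x)) / (1 + ε * x) ^ 3 ∧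
    iteratedDeriv 3 (fun z => f (z / (1 + ε * z))) x
      = deriv (deriv (deriv f)) (x / (1 + ε * x)) / (1 + ε * x) ^ 6
        - 6 * ε * deriv (deriv f) (x / (1 + ε * x)) / (1 + ε * x) ^ 5
        + 6 * ε ^ 2 * deriv f (x / (1 + ε * x)) / (1 + ε * x) ^ 4 := by
  have hf2 : ContDiff ℝ 2 (deriv f) := by
    have := (contDiff_succ_iff_deriv (n := 2)).mp (by exact_mod_cast hf)
    exact this.2.2
  have hf1 : ContDiff ℝ 1 (deriv (deriv f)) := by
    have := (contDiff_succ_iff_deriv (n := 1)).mp (by exact_mod_cast hf2)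
    exact this.2.2
  have hdf : Differentiable ℝ f := hf.differentiable (by norm_num)
  have hdf1 : Differentiable ℝ (deriv f) := hf2.differentiable (by norm_num)
  have hdf2 : Differentiable ℝ (deriv (deriv f)) := hf1.differentiable (by norm_num)
  set φ : ℝ → ℝ := fun z => z / (1 + ε * z) with hφdef
  set w : ℝ → ℝ := fun z => f (φ z) with hwdef
  set s : Set ℝ := {z | 1 + ε * z ≠ 0} with hsdef
  have hs : IsOpen s := isOpen_compl_singleton.preimage (by continuity)
  have hxs : x ∈ s := hc
  -- derivative of the Möbius map
  have hlin : ∀ z : ℝ, HasDerivAt (fun z => 1 + ε * z) ε z := fun z => by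
    simpa using ((hasDerivAt_id z).const_mul ε).const_add 1
  have hφ : ∀ z ∈ s, HasDerivAt φ (1 / (1 + ε * z) ^ 2) z := by
    intro z hz
    have := (hasDerivAt_id z).div (hlin z) hz
    rw [show (1 * (1 + ε * z) - id z * ε) / (1 + ε * z) ^ 2
        = 1 / (1 + ε * z) ^ 2 by simp; ring_nf] at this
    exact this
  have hpow : ∀ (n : ℕ) (z : ℝ), HasDerivAt (fun z => (1 + ε * z) ^ n)
      ((n : ℝ) * (1 + ε * z) ^ (n - 1) * ε) z := fun n z => (hlin z).pow n
  -- first derivative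
  have hw1 : ∀ z ∈ s, HasDerivAt w (deriv f (φ z) / (1 + ε * z) ^ 2) z := by
    intro z hz
    have h := ((hdf (φ z)).hasDerivAt).comp z (hφ z hz)
    refine h.congr_deriv ?_
    field_simp
  set g1 : ℝ → ℝ := fun z => deriv f (φ z) / (1 + ε * z) ^ 2 with hg1def
  set g2 : ℝ → ℝ := fun z => deriv (deriv f) (φ z) / (1 + ε * z) ^ 4
      - 2 * ε * deriv f (φ z) / (1 + ε * z) ^ 3 with hg2def
  set g3 : ℝ → ℝ := fun z => deriv (deriv (deriv f)) (φ z) / (1 + ε * z) ^ 6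
      - 6 * ε * deriv (deriv f) (φ z) / (1 + ε * z) ^ 5
      + 6 * ε ^ 2 * deriv f (φ z) / (1 + ε * z) ^ 4 with hg3def
  have hF1 : ∀ z ∈ s, HasDerivAt (fun z => deriv f (φ z))
      (deriv (deriv f) (φ z) * (1 / (1 + ε * z) ^ 2)) z := fun z hz =>
    ((hdf1 (φ z)).hasDerivAt).comp z (hφ z hz)
  have hF2 : ∀ z ∈ s, HasDerivAt (fun z => deriv (deriv f) (φ z))
      (deriv (deriv (deriv f)) (φ z) * (1 / (1 + ε * z) ^ 2)) z := fun z hz =>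
    ((hdf2 (φ z)).hasDerivAt).comp z (hφ z hz)
  have hcne : ∀ z ∈ s, (1 + ε * z) ≠ 0 := fun z hz => hz
  have hg1' : ∀ z ∈ s, HasDerivAt g1 (g2 z) z := by
    intro z hz
    have h := (hF1 z hz).div (hpow 2 z) (pow_ne_zero 2 (hcne z hz))
    refine h.congr_deriv ?_
    have h0 := hcne z hz
    simp only [hg2def]
    field_simp
    ring
  have hg2' : ∀ z ∈ s, HasDerivAt g2 (g3 z) z := by
    intro z hz
    have hA := (hF2 z hz).div (hpow 4 z) (pow_ne_zero 4 (hcne z hz))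
    have hB := (((hF1 z hz).div (hpow 3 z) (pow_ne_zero 3 (hcne z hz))).const_mul (2 * ε))
    have hg2eq : g2 = fun z => deriv (deriv f) (φ z) / (1 + ε * z) ^ 4
        - 2 * ε * (deriv f (φ z) / (1 + ε * z) ^ 3) := by
      funext z; simp only [hg2def]; ring
    rw [hg2eq]
    have h0 := hcne z hz
    refine (hA.sub hB).congr_deriv ?_
    simp only [hg3def]
    field_simp
    ring
  -- identify deriv w with g1 on s
  have hdw : ∀ z ∈ s, deriv w z = g1 z := fun z hz => (hw1 z hz).deriv
  have hdw_ev : ∀ z ∈ s, deriv w =ᶠ[𝓝 z] g1 := fun z hz =>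
    Filter.eventuallyEq_of_mem (hs.mem_nhds hz) hdw
  have hd2w : ∀ z ∈ s, deriv (deriv w) z = g2 z := fun z hz => by
    rw [(hdw_ev z hz).deriv_eq]; exact (hg1' z hz).deriv
  have hd2w_ev : deriv (deriv w) =ᶠ[𝓝 x] g2 :=
    Filter.eventuallyEq_of_mem (hs.mem_nhds hxs) hd2w
  have hd3w : deriv (deriv (deriv w)) x = g3 x := by
    rw [hd2w_ev.deriv_eq]; exact (hg2' x hxs).deriv
  refine ⟨hdw x hxs, ?_, ?_⟩
  · rw [show (2 : ℕ) = 1 + 1 from rfl, iteratedDeriv_succ, iteratedDeriv_one]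
    exact hd2w x hxs
  · rw [show (3 : ℕ) = 1 + 1 + 1 from rfl, iteratedDeriv_succ, iteratedDeriv_succ,
      iteratedDeriv_one]
    exact hd3w

/-- Projective symmetry of the Schwarzian evolution equation
`u_t = K (u_{xxx}/u_x³ - (3/2) u_{xx}²/u_x⁴)`: if `u` is a solution with
`u_x ≠ 0` everywhere (each `u t` being `C³`), then for any `ε ∈ ℝ`, the
function `v t x = u t (x / (1 + ε x))` is again a solution at every point
with `1 + ε x ≠ 0`. -/
theorem schwarzian_projective_symmetry (K : ℝ) (u : ℝ → ℝ → ℝ)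
    (hreg : ∀ t, ContDiff ℝ 3 (u t))
    (hx : ∀ t x, deriv (u t) x ≠ 0)
    (hsol : ∀ t x, HasDerivAt (fun s => u s x)
      (K * (iteratedDeriv 3 (u t) x / (deriv (u t) x) ^ 3
        - (3 / 2) * (iteratedDeriv 2 (u t) x) ^ 2 / (deriv (u t) x) ^ 4)) t)
    (ε : ℝ) (v : ℝ → ℝ → ℝ)
    (hv : ∀ t x, v t x = u t (x / (1 + ε * x))) :
    ∀ t x, 1 + ε * x ≠ 0 →
      deriv (v t) x ≠ 0 ∧
      HasDerivAt (fun s => v s x)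
        (K * (iteratedDeriv 3 (v t) x / (deriv (v t) x) ^ 3
          - (3 / 2) * (iteratedDeriv 2 (v t) x) ^ 2 / (deriv (v t) x) ^ 4)) t := by
  intro t x hc
  have hvt : v t = fun z => u t (z / (1 + ε * z)) := funext (hv t)
  obtain ⟨d1, d2, d3⟩ := moebius_derivs (u t) (hreg t) ε x hc
  set y := x / (1 + ε * x) with hy
  have hu1 : deriv (u t) y ≠ 0 := hx t y
  have hiu2 : iteratedDeriv 2 (u t) y = deriv (deriv (u t)) y := by
    rw [show (2 : ℕ) = 1 + 1 from rfl, iteratedDeriv_succ, iteratedDeriv_one]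
  have hiu3 : iteratedDeriv 3 (u t) y = deriv (deriv (deriv (u t))) y := by
    rw [show (3 : ℕ) = 1 + 1 + 1 from rfl, iteratedDeriv_succ, iteratedDeriv_succ,
      iteratedDeriv_one]
  constructor
  · rw [hvt, d1]
    exact div_ne_zero hu1 (pow_ne_zero 2 hc)
  · have hfun : (fun s => v s x) = fun s => u s y := funext fun s => hv s x
    rw [hfun, hvt, d1, d2, d3]
    have key : K * ((deriv (deriv (deriv (u t))) y / (1 + ε * x) ^ 6
          - 6 * ε * deriv (deriv (u t)) y / (1 + ε * x) ^ 5
          + 6 * ε ^ 2 * deriv (u t) y / (1 + ε * x) ^ 4)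
          / (deriv (u t) y / (1 + ε * x) ^ 2) ^ 3
        - 3 / 2 * (deriv (deriv (u t)) y / (1 + ε * x) ^ 4
            - 2 * ε * deriv (u t) y / (1 + ε * x) ^ 3) ^ 2
          / (deriv (u t) y / (1 + ε * x) ^ 2) ^ 4)
        = K * (iteratedDeriv 3 (u t) y / (deriv (u t) y) ^ 3
          - 3 / 2 * (iteratedDeriv 2 (u t) y) ^ 2 / (deriv (u t) y) ^ 4) := by
      rw [hiu2, hiu3]
      congr 1
      field_simp
      ring
    rw [key]
    exact hsol t y
end

section
/- Fix K ∈ ℝ. Let u : ℝ → ℝ → ℝ be such that for every t the function u t is three times continuously differentiable (ContDiff ℝ 3), deriv (u t) x ≠ 0 for all t, x, and u is a solution of the Schwarzian evolution equation: for all t, x, the function s ↦ u s x has derivative K·( iteratedDeriv 3 (u t) x / (deriv (u t) x)³ − (3/2)·(iteratedDeriv 2 (u t) x)² / (deriv (u t) x)⁴ ) at s = t. Then for every λ > 0, the function v defined by v t x = λ^(1/3) · u (t/λ) x (real power) is again a solution: for all t, x, deriv (v t) x ≠ 0 and the function s ↦ v s x has derivative K·( iteratedDeriv 3 (v t) x /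 (deriv (v t) x)³ − (3/2)·(iteratedDeriv 2 (v t) x)² / (deriv (v t) x)⁴ ) at s = t. -/
lemma iteratedDeriv_mul_const' (n : ℕ) (c : ℝ) (f : ℝ → ℝ) :
    iteratedDeriv n (fun x => c * f x) = fun x => c * iteratedDeriv n f x := by
  induction n generalizing f with
  | zero => simp [iteratedDeriv_zero]
  | succ n ih =>
    rw [iteratedDeriv_succ', iteratedDeriv_succ']
    have hd : deriv (fun x => c * f x) = fun x => c * deriv f x := by
      funext x; exact deriv_const_mul_field c
    rw [hd, ih]

/-- Scaling symmetry of the Schwarzian evolution equation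
`u_t = K (u_{xxx}/u_x³ - (3/2) u_{xx}²/u_x⁴)`: if `u` is a solution with
`u_x ≠ 0` everywhere (each `u t` being `C³`), then for every `λ > 0` the
function `v t x = λ^(1/3) * u (t/λ) x` is again a solution. -/
theorem schwarzian_scaling_symmetry (K : ℝ) (u : ℝ → ℝ → ℝ)
    (hreg : ∀ t, ContDiff ℝ 3 (u t))
    (hx : ∀ t x, deriv (u t) x ≠ 0)
    (hsol : ∀ t x, HasDerivAt (fun s => u s x)
      (K * (iteratedDeriv 3 (u t) x / (deriv (u t) x) ^ 3
        - (3 / 2) * (iteratedDeriv 2 (u t) x) ^ 2 / (deriv (u t) x) ^ 4)) t) :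
    ∀ l : ℝ, 0 < l → ∀ v : ℝ → ℝ → ℝ,
      (∀ t x, v t x = l ^ ((1 : ℝ) / 3) * u (t / l) x) →
      ∀ t x, deriv (v t) x ≠ 0 ∧
        HasDerivAt (fun s => v s x)
          (K * (iteratedDeriv 3 (v t) x / (deriv (v t) x) ^ 3
            - (3 / 2) * (iteratedDeriv 2 (v t) x) ^ 2 / (deriv (v t) x) ^ 4)) t := by
  intro l hl v hv t x
  set c : ℝ := l ^ ((1 : ℝ) / 3) with hc
  have hcpos : 0 < c := Real.rpow_pos_of_pos hl _
  have hc3 : c ^ 3 = l := by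
    rw [hc, ← Real.rpow_natCast (l ^ ((1:ℝ)/3)) 3, ← Real.rpow_mul hl.le]
    norm_num
  have hl0 : l ≠ 0 := hl.ne'
  have hc0 : c ≠ 0 := hcpos.ne'
  have hvt : v t = fun y => c * u (t / l) y := funext fun y => hv t y
  have hderiv : deriv (v t) = fun y => c * deriv (u (t / l)) y := by
    rw [hvt]; funext y; exact deriv_const_mul_field c
  have h2 : iteratedDeriv 2 (v t) x = c * iteratedDeriv 2 (u (t / l)) x := by
    rw [hvt, iteratedDeriv_mul_const']
  have h3 : iteratedDeriv 3 (v t) x = c * iteratedDeriv 3 (u (t / l)) x := by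
    rw [hvt, iteratedDeriv_mul_const']
  have hd1 : deriv (v t) x = c * deriv (u (t / l)) x := by rw [hderiv]
  have hu1 : deriv (u (t / l)) x ≠ 0 := hx _ _
  refine ⟨by rw [hd1]; exact mul_ne_zero hc0 hu1, ?_⟩
  -- time derivative
  have hcomp : HasDerivAt (fun s => v s x)
      (c * ((K * (iteratedDeriv 3 (u (t / l)) x / (deriv (u (t / l)) x) ^ 3
        - (3 / 2) * (iteratedDeriv 2 (u (t / l)) x) ^ 2 / (deriv (u (t / l)) x) ^ 4)) * (1 / l))) t := by
    have hs : HasDerivAt (fun s : ℝ => s / l) (1 / l) t := by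
      simpa using (hasDerivAt_id t).div_const l
    have := ((hsol (t / l) x).comp t hs).const_mul c
    refine this.congr_of_eventuallyEq ?_
    filter_upwards with s
    simp [hv s x, Function.comp]
  convert hcomp using 1
  rw [hd1, h2, h3]
  field_simp
  rw [← hc3]
end

section
/- Let f, g, c : ℝ → ℝ → ℝ be such that for every t the function c t is three times continuously differentiable (ContDiff ℝ 3), iteratedDeriv 2 (c t) x ≠ 0 for all t, x, and for all t, x the function s ↦ c s x is differentiable at t. Suppose u : ℝ → ℝ → ℝ satisfies: each u t is ContDiff ℝ 3, and for all t, x the function s ↦ u s x has derivative f t x · iteratedDeriv 3 (u t) x + ((deriv (fun s => c s x) t − f t x · iteratedDeriv 3 (c t) x) / iteratedDeriv 2 (c t) x) · iteratedDeriv 2 (u t) x + g t x at s = t. Then for all real constants α, β, γ, the function w defined by w t x = u t x + α + β·x + γ·c t x satisfies the same equation: for all t, x, the function s ↦ w s x has derivative f t x · iteratedDeriv 3 (w t) x + ((deriv (fun s => c s x) t − f t x · iteratedDeriv 3 (c t) x) / iteratedDeriv 2 (c t) x) · iteratedDeriv 2 (w t) x + g t x at s = t. -/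
private lemma itd_add {n : ℕ} {f g : ℝ → ℝ} (hf : ContDiff ℝ n f) (hg : ContDiff ℝ n g)
    (x : ℝ) :
    iteratedDeriv n (fun y => f y + g y) x = iteratedDeriv n f x + iteratedDeriv n g x := by
  simp only [← iteratedDerivWithin_univ]
  exact iteratedDerivWithin_add (Set.mem_univ x) uniqueDiffOn_univ
    hf.contDiffWithinAt hg.contDiffWithinAt

private lemma itd_affine (α β : ℝ) {n : ℕ} (hn : 2 ≤ n) (x : ℝ) :
    iteratedDeriv n (fun y : ℝ => α + β * y) x = 0 := by
  obtain ⟨m, rfl⟩ : ∃ m, n = m + 2 := ⟨n - 2, by omega⟩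
  rw [show m + 2 = m + 1 + 1 by omega, iteratedDeriv_succ', iteratedDeriv_succ']
  have h1 : deriv (fun y : ℝ => α + β * y) = fun _ => β := by
    funext y; simpa using (((hasDerivAt_id y).const_mul β).const_add α).deriv
  rw [h1]
  have h0 : deriv (fun _ : ℝ => β) = fun _ : ℝ => (0:ℝ) := by
    funext y; simp
  rw [h0]
  induction m with
  | zero => simp
  | succ k ih => rw [iteratedDeriv_succ', show deriv (fun _ : ℝ => (0:ℝ)) = fun _ : ℝ => (0:ℝ) from funext fun _ => deriv_const _ _]; exact ih (by omega)

/-- The flows of the abelian symmetry algebra `⟨∂u, x ∂u, c(t,x) ∂u⟩` map solutions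
of the quasi-linear equation
`u_t = f u_{xxx} + ((c_t - f c_{xxx})/c_{xx}) u_{xx} + g`
to solutions: if `u` solves the equation, so does
`w t x = u t x + α + β x + γ c t x` for all real constants `α, β, γ`. -/
theorem abelian_rank_one_symmetry_flows (f g c : ℝ → ℝ → ℝ)
    (hc_reg : ∀ t, ContDiff ℝ 3 (c t))
    (hc2 : ∀ t x, iteratedDeriv 2 (c t) x ≠ 0)
    (hc_t : ∀ t x, DifferentiableAt ℝ (fun s => c s x) t)
    (u : ℝ → ℝ → ℝ)
    (hu_reg : ∀ t, ContDiff ℝ 3 (u t))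
    (hu : ∀ t x, HasDerivAt (fun s => u s x)
      (f t x * iteratedDeriv 3 (u t) x
        + ((deriv (fun s => c s x) t - f t x * iteratedDeriv 3 (c t) x)
            / iteratedDeriv 2 (c t) x) * iteratedDeriv 2 (u t) x
        + g t x) t)
    (α β γ : ℝ) (w : ℝ → ℝ → ℝ)
    (hw : ∀ t x, w t x = u t x + α + β * x + γ * c t x) :
    ∀ t x, HasDerivAt (fun s => w s x)
      (f t x * iteratedDeriv 3 (w t) x
        + ((deriv (fun s => c s x) t - f t x * iteratedDeriv 3 (c t) x)
            / iteratedDeriv 2 (c t) x) * iteratedDeriv 2 (w t) x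
        + g t x) t := by
  intro t x
  have hwt : w t = fun y => (fun y => u t y + (α + β * y)) y + γ * c t y := by
    funext y; rw [hw t y]; ring
  have haff : ContDiff ℝ 3 (fun y : ℝ => α + β * y) :=
    contDiff_const.add (contDiff_const.mul contDiff_id)
  have hsum : ContDiff ℝ 3 (fun y => u t y + (α + β * y)) := (hu_reg t).add haff
  have hgc : ContDiff ℝ 3 (fun y => γ * c t y) := (hc_reg t).const_smul γ
  have key : ∀ n : ℕ, 2 ≤ n → n ≤ 3 →
      iteratedDeriv n (w t) x = iteratedDeriv n (u t) x + γ * iteratedDeriv n (c t) x := by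
    intro n h2 h3
    have hn3 : (n : WithTop ℕ∞) ≤ 3 := by exact_mod_cast h3
    rw [hwt, itd_add (hsum.of_le hn3) (hgc.of_le hn3) x,
      itd_add ((hu_reg t).of_le hn3) (haff.of_le hn3) x, itd_affine α β h2 x,
      show iteratedDeriv n (fun y => γ * c t y) x = γ * iteratedDeriv n (c t) x from by
        simp only [← iteratedDerivWithin_univ]
        exact iteratedDerivWithin_const_mul (Set.mem_univ x) uniqueDiffOn_univ γ
          ((hc_reg t).of_le hn3).contDiffWithinAt]
    ring
  have h3 := key 3 (by norm_num) le_rfl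
  have h2 := key 2 (by norm_num) (by norm_num)
  set ct := deriv (fun s => c s x) t with hct
  have hcd : HasDerivAt (fun s => c s x) ct t := (hc_t t x).hasDerivAt
  have hws : (fun s => w s x) = fun s => u s x + α + β * x + γ * c s x := by
    funext s; exact hw s x
  have hder : HasDerivAt (fun s => w s x)
      ((f t x * iteratedDeriv 3 (u t) x
        + ((ct - f t x * iteratedDeriv 3 (c t) x)
            / iteratedDeriv 2 (c t) x) * iteratedDeriv 2 (u t) x
        + g t x) + γ * ct) t := by
    rw [hws]
    exact (((hu t x).add_const α).add_const (β * x)).add (hcd.const_mul γ)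
  convert hder using 1
  have hC := hc2 t x
  have e : ((ct - f t x * iteratedDeriv 3 (c t) x) / iteratedDeriv 2 (c t) x)
      * (γ * iteratedDeriv 2 (c t) x) = γ * (ct - f t x * iteratedDeriv 3 (c t) x) := by
    rw [mul_comm γ, ← mul_assoc, div_mul_cancel₀ _ hC]; ring
  rw [h2, h3, mul_add, mul_add, e]
  ring
end

section
/- Let F, G : ℝ × ℝ × ℝ × ℝ × ℝ → ℝ be differentiable functions of the variables (t, x, u, p, q) (here p, q stand for u₁, u₂), and let c : ℝ → ℝ be three times differentiable with second derivative c''(x) ≠ 0 for all x. Suppose F and G satisfy, at every point (t,x,u,p,q): (i) ∂F/∂t = 0 and ∂G/∂t = 0; (ii) ∂F/∂u = 0 and ∂G/∂u = 0; (iii) ∂F/∂p + x·∂F/∂u = 0 and ∂G/∂p + x·∂G/∂u = 0; (iv) c''(x)·∂F/∂q + c'(x)·∂F/∂p + c(x)·∂F/∂u = 0; and (v) F·c'''(x) + c''(x)·∂G/∂q + c'(x)·∂G/∂p + c(x)·∂G/∂u = 0. Then there exist functions f, g : ℝ → ℝ such that for all (t,x,u,p,q): F(t,x,u,p,q) = f(x)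 and G(t,x,u,p,q) = −(c'''(x)·f(x)/c''(x))·q + g(x). -/
private lemma affine_dir (G : ℝ × ℝ × ℝ × ℝ × ℝ → ℝ) (hG : Differentiable ℝ G)
    (a v : ℝ × ℝ × ℝ × ℝ × ℝ) (k : ℝ)
    (h : ∀ s : ℝ, fderiv ℝ G (a + s • v) v = k) (s : ℝ) :
    G (a + s • v) = G a + k * s := by
  set ψ : ℝ → ℝ := fun s => G (a + s • v) - k * s with hψ
  have hline : ∀ s : ℝ, HasDerivAt (fun s : ℝ => a + s • v) v s := by
    intro s
    simpa using ((hasDerivAt_id s).smul_const v).const_add a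
  have hder : ∀ s : ℝ, HasDerivAt ψ 0 s := by
    intro s
    have h1 : HasDerivAt (fun s : ℝ => G (a + s • v)) (fderiv ℝ G (a + s • v) v) s :=
      (hG (a + s • v)).hasFDerivAt.comp_hasDerivAt s (hline s)
    have h2 : HasDerivAt (fun s : ℝ => k * s) k s := by
      simpa using (hasDerivAt_id s).const_mul k
    have h3 := h1.sub h2
    rw [h s, sub_self] at h3
    exact h3
  have hconst : ψ s = ψ 0 :=
    is_const_of_deriv_eq_zero (fun x => (hder x).differentiableAt)
      (fun x => (hder x).deriv) s 0
  simp only [hψ] at hconst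
  simp at hconst
  linarith [hconst]

/-- If `F, G` satisfy the determining equations for the vector fields
`∂t`, `∂u`, `x ∂u`, `c(x) ∂u` (with `c'' ≠ 0`) to be symmetries of the evolution
equation `u_t = F(t,x,u,u₁,u₂) u₃ + G(t,x,u,u₁,u₂)`, then
`F(t,x,u,p,q) = f(x)` and `G(t,x,u,p,q) = -(c'''(x) f(x)/c''(x)) q + g(x)`
for some functions `f, g`. -/
theorem four_dim_abelian_symmetry_forces_quasilinear
    (F G : ℝ × ℝ × ℝ × ℝ × ℝ → ℝ)
    (hF : Differentiable ℝ F) (hG : Differentiable ℝ G)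
    (c : ℝ → ℝ)
    (hc1 : Differentiable ℝ c)
    (hc2 : Differentiable ℝ (deriv c))
    (hc3 : Differentiable ℝ (deriv (deriv c)))
    (hcne : ∀ x, deriv (deriv c) x ≠ 0)
    -- (i) invariance under ∂t
    (h1F : ∀ t x u p q : ℝ, fderiv ℝ F (t, x, u, p, q) (1, 0, 0, 0, 0) = 0)
    (h1G : ∀ t x u p q : ℝ, fderiv ℝ G (t, x, u, p, q) (1, 0, 0, 0, 0) = 0)
    -- (ii) invariance under ∂u
    (h2F : ∀ t x u p q : ℝ, fderiv ℝ F (t, x, u, p, q) (0, 0, 1, 0, 0) = 0)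
    (h2G : ∀ t x u p q : ℝ, fderiv ℝ G (t, x, u, p, q) (0, 0, 1, 0, 0) = 0)
    -- (iii) invariance under x ∂u
    (h3F : ∀ t x u p q : ℝ, fderiv ℝ F (t, x, u, p, q) (0, 0, 0, 1, 0)
      + x * fderiv ℝ F (t, x, u, p, q) (0, 0, 1, 0, 0) = 0)
    (h3G : ∀ t x u p q : ℝ, fderiv ℝ G (t, x, u, p, q) (0, 0, 0, 1, 0)
      + x * fderiv ℝ G (t, x, u, p, q) (0, 0, 1, 0, 0) = 0)
    -- (iv) invariance of F under c(x) ∂u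
    (h4F : ∀ t x u p q : ℝ,
      deriv (deriv c) x * fderiv ℝ F (t, x, u, p, q) (0, 0, 0, 0, 1)
      + deriv c x * fderiv ℝ F (t, x, u, p, q) (0, 0, 0, 1, 0)
      + c x * fderiv ℝ F (t, x, u, p, q) (0, 0, 1, 0, 0) = 0)
    -- (v) invariance of G under c(x) ∂u
    (h5G : ∀ t x u p q : ℝ,
      F (t, x, u, p, q) * deriv (deriv (deriv c)) x
      + deriv (deriv c) x * fderiv ℝ G (t, x, u, p, q) (0, 0, 0, 0, 1)
      + deriv c x * fderiv ℝ G (t, x, u, p, q) (0, 0, 0, 1, 0)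
      + c x * fderiv ℝ G (t, x, u, p, q) (0, 0, 1, 0, 0) = 0) :
    ∃ f g : ℝ → ℝ, ∀ t x u p q : ℝ,
      F (t, x, u, p, q) = f x ∧
      G (t, x, u, p, q)
        = -(deriv (deriv (deriv c)) x * f x / deriv (deriv c) x) * q + g x := by
  -- pointwise derivative facts
  have hpF : ∀ t x u p q : ℝ, fderiv ℝ F (t, x, u, p, q) (0, 0, 0, 1, 0) = 0 := by
    intro t x u p q
    have := h3F t x u p q
    rw [h2F t x u p q] at this
    linarith
  have hqF : ∀ t x u p q : ℝ, fderiv ℝ F (t, x, u, p, q) (0, 0, 0, 0, 1) = 0 := by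
    intro t x u p q
    have := h4F t x u p q
    rw [h2F t x u p q, hpF t x u p q] at this
    have h0 := hcne x
    have : deriv (deriv c) x * fderiv ℝ F (t, x, u, p, q) (0, 0, 0, 0, 1) = 0 := by
      linarith
    exact (mul_eq_zero.mp this).resolve_left h0
  have hpG : ∀ t x u p q : ℝ, fderiv ℝ G (t, x, u, p, q) (0, 0, 0, 1, 0) = 0 := by
    intro t x u p q
    have := h3G t x u p q
    rw [h2G t x u p q] at this
    linarith
  have hqG : ∀ t x u p q : ℝ, fderiv ℝ G (t, x, u, p, q) (0, 0, 0, 0, 1)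
      = -(deriv (deriv (deriv c)) x * F (t, x, u, p, q)) / deriv (deriv c) x := by
    intro t x u p q
    have := h5G t x u p q
    rw [h2G t x u p q, hpG t x u p q] at this
    rw [eq_div_iff (hcne x)]
    linarith
  -- F depends only on x
  have hFx : ∀ t x u p q : ℝ, F (t, x, u, p, q) = F (0, x, 0, 0, 0) := by
    intro t x u p q
    have e1 : F (t, x, u, p, q) = F (0, x, u, p, q) := by
      have := affine_dir F hF (0, x, u, p, q) (1, 0, 0, 0, 0) 0
        (fun s => by simpa using h1F s x u p q) t
      simpa using this
    have e2 : F (0, x, u, p, q) = F (0, x, 0, p, q) := by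
      have := affine_dir F hF (0, x, 0, p, q) (0, 0, 1, 0, 0) 0
        (fun s => by simpa using h2F 0 x s p q) u
      simpa using this
    have e3 : F (0, x, 0, p, q) = F (0, x, 0, 0, q) := by
      have := affine_dir F hF (0, x, 0, 0, q) (0, 0, 0, 1, 0) 0
        (fun s => by simpa using hpF 0 x 0 s q) p
      simpa using this
    have e4 : F (0, x, 0, 0, q) = F (0, x, 0, 0, 0) := by
      have := affine_dir F hF (0, x, 0, 0, 0) (0, 0, 0, 0, 1) 0
        (fun s => by simpa using hqF 0 x 0 0 s) q
      simpa using this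
    rw [e1, e2, e3, e4]
  refine ⟨fun x => F (0, x, 0, 0, 0), fun x => G (0, x, 0, 0, 0),
    fun t x u p q => ⟨hFx t x u p q, ?_⟩⟩
  -- G part
  have e1 : G (t, x, u, p, q) = G (0, x, u, p, q) := by
    have := affine_dir G hG (0, x, u, p, q) (1, 0, 0, 0, 0) 0
      (fun s => by simpa using h1G s x u p q) t
    simpa using this
  have e2 : G (0, x, u, p, q) = G (0, x, 0, p, q) := by
    have := affine_dir G hG (0, x, 0, p, q) (0, 0, 1, 0, 0) 0
      (fun s => by simpa using h2G 0 x s p q) u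
    simpa using this
  have e3 : G (0, x, 0, p, q) = G (0, x, 0, 0, q) := by
    have := affine_dir G hG (0, x, 0, 0, q) (0, 0, 0, 1, 0) 0
      (fun s => by simpa using hpG 0 x 0 s q) p
    simpa using this
  have e4 : G (0, x, 0, 0, q) = G (0, x, 0, 0, 0)
      + (-(deriv (deriv (deriv c)) x * F (0, x, 0, 0, 0)) / deriv (deriv c) x) * q := by
    have := affine_dir G hG (0, x, 0, 0, 0) (0, 0, 0, 0, 1)
      (-(deriv (deriv (deriv c)) x * F (0, x, 0, 0, 0)) / deriv (deriv c) x)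
      (fun s => by
        have h := hqG 0 x 0 0 s
        rw [hFx 0 x 0 0 s] at h
        simpa using h) q
    simpa using this
  rw [e1, e2, e3, e4]
  ring
end
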